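/- arXiv:1201.0874 — 2 statements merged into one kernel-verified Lean document; each statement's English description precedes it below -/
import Mathlib

section
/- In λ_S, the terms Sk.⟨t⟩ and Sk.t are applicatively bisimilar for every term t with fv(t) ⊆ {k}. -/
namespace LamS

/-- Terms of the λ-calculus with shift and reset, in de Bruijn representation.
    `lam` and `shift` bind variable 0. -/
inductive Tm : Type
  | var : ℕ → Tm
  | lam : Tm → Tm
  | app : Tm → Tm → Tm
  | shift : Tm → Tm
  | reset : Tm → Tm
  deriving DecidableEq

open Tm

/-- Lift (shift up) free de Bruijn indices `≥ c` by `d`. -/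
def liftT (d : ℕ) : ℕ → Tm → Tm
  | c, var n => if n < c then var n else var (n + d)
  | c, lam t => lam (liftT d (c+1) t)
  | c, app a b => app (liftT d c a) (liftT d c b)
  | c, shift t => shift (liftT d (c+1) t)
  | c, reset t => reset (liftT d c t)

/-- Capture-avoiding substitution `t[j := s]` (de Bruijn). -/
def substT : ℕ → Tm → Tm → Tm
  | j, s, var n => if n = j then liftT j 0 s else if j < n then var (n-1) else var n
  | j, s, lam t => lam (substT (j+1) s t)
  | j, s, app a b => app (substT j s a) (substT j s b)
  | j, s, shift t => shift (substT (j+1) s t)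
  | j, s, reset t => reset (substT j s t)

/-- Values are λ-abstractions. -/
def IsValue (t : Tm) : Prop := ∃ b, t = lam b

/-- All free variables are `< n`. -/
def ClosedUnder : ℕ → Tm → Prop
  | n, var m => m < n
  | n, lam t => ClosedUnder (n+1) t
  | n, app a b => ClosedUnder n a ∧ ClosedUnder n b
  | n, shift t => ClosedUnder (n+1) t
  | n, reset t => ClosedUnder n t

def Closed (t : Tm) : Prop := ClosedUnder 0 t

/-- Pure evaluation contexts, interpreted inside-out:
    `appV b E` is `E[(λ.b) []]` and `appL E t` is `E[[] t]`. -/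
inductive PCtx : Type
  | hole : PCtx
  | appV : Tm → PCtx → PCtx
  | appL : PCtx → Tm → PCtx
  deriving DecidableEq

def PCtx.plug : PCtx → Tm → Tm
  | .hole, t => t
  | .appV b E, t => E.plug (app (lam b) t)
  | .appL E s, t => E.plug (app t s)

def PCtx.liftC (d : ℕ) : ℕ → PCtx → PCtx
  | _, .hole => .hole
  | c, .appV b E => .appV (liftT d (c+1) b) (PCtx.liftC d c E)
  | c, .appL E s => .appL (PCtx.liftC d c E) (liftT d c s)

/-- Composition of pure contexts: `(E.comp E').plug t = E.plug (E'.plug t)`. -/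
def PCtx.comp : PCtx → PCtx → PCtx
  | E, .hole => E
  | E, .appV b E' => .appV b (E.comp E')
  | E, .appL E' s => .appL (E.comp E') s

/-- The captured delimited continuation `λx.⟨E[x]⟩`. -/
def contOf (E : PCtx) : Tm := lam (reset ((PCtx.liftC 1 0 E).plug (var 0)))

/-- Call-by-value evaluation contexts, interpreted inside-out. -/
inductive ECtx : Type
  | hole : ECtx
  | appV : Tm → ECtx → ECtx
  | appL : ECtx → Tm → ECtx
  | resetC : ECtx → ECtx
  deriving DecidableEq

def ECtx.plug : ECtx → Tm → Tm
  | .hole, t => t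
  | .appV b F, t => F.plug (app (lam b) t)
  | .appL F s, t => F.plug (app t s)
  | .resetC F, t => F.plug (reset t)

def ClosedECtx : ECtx → Prop
  | .hole => True
  | .appV b F => ClosedUnder 1 b ∧ ClosedECtx F
  | .appL F s => ClosedECtx F ∧ Closed s
  | .resetC F => ClosedECtx F

/-- One-step reduction of λ_S. -/
inductive Red : Tm → Tm → Prop
  | beta (F : ECtx) (t v : Tm) (hv : IsValue v) :
      Red (F.plug (app (lam t) v)) (F.plug (substT 0 v t))
  | cap (F : ECtx) (E : PCtx) (t : Tm) :
      Red (F.plug (reset (E.plug (shift t)))) (F.plug (reset (substT 0 (contOf E) t)))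
  | res (F : ECtx) (v : Tm) (hv : IsValue v) :
      Red (F.plug (reset v)) (F.plug v)

def RedStar : Tm → Tm → Prop := Relation.ReflTransGen Red

/-- A term is stuck if it is not a value and cannot reduce. -/
def Stuck (t : Tm) : Prop := ¬ IsValue t ∧ ∀ u, ¬ Red t u

/-- Evaluation: reduce to an irreducible term. -/
def Eval (t t' : Tm) : Prop := RedStar t t' ∧ ∀ u, ¬ Red t' u

def IsRedex (r : Tm) : Prop :=
  (∃ t v, IsValue v ∧ r = app (lam t) v) ∨
  (∃ E s, r = reset (PCtx.plug E (shift s))) ∨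
  (∃ v, IsValue v ∧ r = reset v)

/-- Labels of the LTS. -/
inductive Label : Type
  | tau : Label
  | val : Tm → Label
  | ctx : PCtx → Label

/-- The labelled transition system for λ_S. -/
inductive Step : Tm → Label → Tm → Prop
  | beta {t v : Tm} (hv : IsValue v) :
      Step (app (lam t) v) .tau (substT 0 v t)
  | resetVal {v : Tm} (hv : IsValue v) :
      Step (reset v) .tau v
  | appL {t0 t0' t1 : Tm} :
      Step t0 .tau t0' → Step (app t0 t1) .tau (app t0' t1)
  | appR {v t t' : Tm} (hv : IsValue v) :
      Step t .tau t' → Step (app v t) .tau (app v t')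
  | resetT {t t' : Tm} :
      Step t .tau t' → Step (reset t) .tau (reset t')
  | resetCap {t t' : Tm} :
      Step t (.ctx .hole) t' → Step (reset t) .tau t'
  | lamApp {t v : Tm} (hv : IsValue v) :
      Step (lam t) (.val v) (substT 0 v t)
  | shiftCap {t : Tm} (E : PCtx) :
      Step (shift t) (.ctx E) (reset (substT 0 (contOf E) t))
  | capL {t0 t0' t1 : Tm} {E : PCtx} :
      Step t0 (.ctx (.appL E t1)) t0' → Step (app t0 t1) (.ctx E) t0'
  | capR {b t t' : Tm} {E : PCtx} :
      Step t (.ctx (.appV b E)) t' → Step (app (lam b) t) (.ctx E) t'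

def TauStar : Tm → Tm → Prop := Relation.ReflTransGen (fun a b => Step a .tau b)

/-- Weak delay transition: τ-steps, then an `l`-step if `l ≠ τ`. -/
def Weak (t : Tm) (l : Label) (t' : Tm) : Prop :=
  match l with
  | .tau => TauStar t t'
  | _ => ∃ u, TauStar t u ∧ Step u l t'

/-- Applicative simulation. -/
def IsSim (R : Tm → Tm → Prop) : Prop :=
  ∀ ⦃t0 t1⦄, R t0 t1 → ∀ ⦃l t0'⦄, Step t0 l t0' →
    ∃ t1', Weak t1 l t1' ∧ R t0' t1'

def IsBisim (R : Tm → Tm → Prop) : Prop := IsSim R ∧ IsSim (flip R)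

/-- Applicative bisimilarity: the largest applicative bisimulation. -/
def Bisim (t0 t1 : Tm) : Prop := ∃ R, IsBisim R ∧ R t0 t1

/-- Big-step applicative simulation. -/
def IsBigSim (R : Tm → Tm → Prop) : Prop :=
  ∀ ⦃t0 t1⦄, R t0 t1 → ∀ ⦃l t0'⦄, l ≠ Label.tau → Weak t0 l t0' →
    ∃ t1', Weak t1 l t1' ∧ R t0' t1'

def IsBigBisim (R : Tm → Tm → Prop) : Prop := IsBigSim R ∧ IsBigSim (flip R)

/-- Big-step applicative bisimilarity. -/
def BigBisim (t0 t1 : Tm) : Prop := ∃ R, IsBigBisim R ∧ R t0 t1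

/-- General contexts. -/
inductive Ctx : Type
  | hole : Ctx
  | lam : Ctx → Ctx
  | appL : Ctx → Tm → Ctx
  | appR : Tm → Ctx → Ctx
  | shift : Ctx → Ctx
  | reset : Ctx → Ctx

/-- Plugging a term in a general context (free variables may be captured). -/
def Ctx.plug : Ctx → Tm → Tm
  | .hole, t => t
  | .lam C, t => Tm.lam (C.plug t)
  | .appL C s, t => Tm.app (C.plug t) s
  | .appR s C, t => Tm.app s (C.plug t)
  | .shift C, t => Tm.shift (C.plug t)
  | .reset C, t => Tm.reset (C.plug t)

def CtxClosedUnder : ℕ → Ctx → Prop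
  | _, .hole => True
  | n, .lam C => CtxClosedUnder (n+1) C
  | n, .appL C s => CtxClosedUnder n C ∧ ClosedUnder n s
  | n, .appR s C => ClosedUnder n s ∧ CtxClosedUnder n C
  | n, .shift C => CtxClosedUnder (n+1) C
  | n, .reset C => CtxClosedUnder n C

def ClosedCtx (C : Ctx) : Prop := CtxClosedUnder 0 C

def EvalsToValue (t : Tm) : Prop := ∃ v, IsValue v ∧ Eval t v

def EvalsToStuck (t : Tm) : Prop := ∃ s, Stuck s ∧ Eval t s

/-- Contextual equivalence on closed terms. -/
def CtxEquiv (t0 t1 : Tm) : Prop :=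
  ∀ C : Ctx, ClosedCtx C →
    (EvalsToValue (C.plug t0) ↔ EvalsToValue (C.plug t1)) ∧
    (EvalsToStuck (C.plug t0) ↔ EvalsToStuck (C.plug t1))

/-- Contextual equivalence restricted to evaluation contexts. -/
def ECtxEquiv (t0 t1 : Tm) : Prop :=
  ∀ F : ECtx, ClosedECtx F →
    (EvalsToValue (F.plug t0) ↔ EvalsToValue (F.plug t1)) ∧
    (EvalsToStuck (F.plug t0) ↔ EvalsToStuck (F.plug t1))

/-- Lifting a substitution under a binder. -/
def liftSub (σ : ℕ → Tm) : ℕ → Tm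
  | 0 => var 0
  | n+1 => liftT 1 0 (σ n)

/-- Apply a substitution to all free variables of a term. -/
def applySub (σ : ℕ → Tm) : Tm → Tm
  | var n => σ n
  | lam t => lam (applySub (liftSub σ) t)
  | app a b => app (applySub σ a) (applySub σ b)
  | shift t => shift (applySub (liftSub σ) t)
  | reset t => reset (applySub σ t)

/-- A closing substitution maps every variable to a closed value. -/
def ClosingSub (σ : ℕ → Tm) : Prop := ∀ n, IsValue (σ n) ∧ Closed (σ n)

/-- Open extension of a relation on closed terms. -/
def OpenExt (R : Tm → Tm → Prop) (t0 t1 : Tm) : Prop :=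
  ∀ σ, ClosingSub σ → R (applySub σ t0) (applySub σ t1)

/-- Howe's closure of applicative bisimilarity (compatible refinement rules inlined). -/
inductive Howe : Tm → Tm → Prop
  | base {t0 t1} : OpenExt Bisim t0 t1 → Howe t0 t1
  | right {t0 t2 t1} : Howe t0 t2 → OpenExt Bisim t2 t1 → Howe t0 t1
  | compVar (n : ℕ) : Howe (var n) (var n)
  | compLam {t0 t1} : Howe t0 t1 → Howe (lam t0) (lam t1)
  | compApp {a0 a1 b0 b1} : Howe a0 a1 → Howe b0 b1 → Howe (app a0 b0) (app a1 b1)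
  | compShift {t0 t1} : Howe t0 t1 → Howe (shift t0) (shift t1)
  | compReset {t0 t1} : Howe t0 t1 → Howe (reset t0) (reset t1)

/-- Howe's closure restricted to closed terms. -/
def HoweC (t0 t1 : Tm) : Prop := Closed t0 ∧ Closed t1 ∧ Howe t0 t1

/-- Extension of Howe's closure to pure contexts. -/
inductive PCtxHowe : PCtx → PCtx → Prop
  | hole : PCtxHowe .hole .hole
  | appV {b0 b1 E0 E1} : Howe b0 b1 → PCtxHowe E0 E1 → PCtxHowe (.appV b0 E0) (.appV b1 E1)
  | appL {E0 E1 t0 t1} : PCtxHowe E0 E1 → Howe t0 t1 → PCtxHowe (.appL E0 t0) (.appL E1 t1)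

/-- Extension of Howe's closure to labels. -/
def LabHowe : Label → Label → Prop
  | .tau, .tau => True
  | .val v0, .val v1 => Closed v0 ∧ Closed v1 ∧ Howe v0 v1
  | .ctx E0, .ctx E1 => PCtxHowe E0 E1
  | _, _ => False

/-- ω = λx. x x -/
def omegaTm : Tm := lam (app (var 0) (var 0))

/-- Ω = ω ω, the standard diverging term. -/
def OmegaTm : Tm := app omegaTm omegaTm

/-- Every τ-reachable term can do a τ-step: only infinite τ-sequences. -/
def Diverges (t : Tm) : Prop := ∀ u, TauStar t u → ∃ u', Step u .tau u'

/-- No weak non-τ transition. -/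
def NoObs (t : Tm) : Prop := ∀ l t', l ≠ Label.tau → ¬ Weak t l t'

/-- The candidate bisimulation. -/
inductive MyR : Tm → Tm → Prop
  | sh (t : Tm) : MyR (shift (reset t)) (shift t)
  | rr (s : Tm) : MyR (reset (reset s)) (reset s)
  | idr (t : Tm) : MyR t t

lemma weak_of_step {t l t'} (h : Step t l t') : Weak t l t' := by
  cases l with
  | tau => exact Relation.ReflTransGen.single h
  | val v => exact ⟨t, .refl, h⟩
  | ctx E => exact ⟨t, .refl, h⟩

lemma ctx_target {s l s'} (h : Step s l s') : ∀ E, l = .ctx E → ∃ w, s' = reset w := by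
  induction h with
  | shiftCap E => exact fun _ _ => ⟨_, rfl⟩
  | capL h ih => exact fun E hE => ih _ rfl
  | capR h ih => exact fun E hE => ih _ rfl
  | beta hv => intro E hE; cases hE
  | resetVal hv => intro E hE; cases hE
  | appL h ih => intro E hE; cases hE
  | appR hv h ih => intro E hE; cases hE
  | resetT h ih => intro E hE; cases hE
  | resetCap h ih => intro E hE; cases hE
  | lamApp hv => intro E hE; cases hE

lemma myR_sim : IsSim MyR := by
  intro t0 t1 hR l t0' hstep
  cases hR with
  | idr t => exact ⟨t0', weak_of_step hstep, MyR.idr _⟩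
  | sh t =>
      cases hstep with
      | shiftCap E =>
          refine ⟨reset (substT 0 (contOf E) t), weak_of_step (Step.shiftCap E), ?_⟩
          simpa [substT] using MyR.rr (substT 0 (contOf E) t)
  | rr s =>
      cases hstep with
      | resetVal hv => rcases hv with ⟨b, hb⟩; cases hb
      | resetT h =>
          cases h with
          | resetVal hv => exact ⟨reset s, Relation.ReflTransGen.refl, MyR.idr _⟩
          | resetT h' => exact ⟨reset _, weak_of_step (Step.resetT h'), MyR.rr _⟩
          | resetCap h' =>
              obtain ⟨w, rfl⟩ := ctx_target h' _ rfl
              exact ⟨reset w, weak_of_step (Step.resetCap h'), MyR.rr w⟩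
      | resetCap h => cases h

lemma myR_flip_sim : IsSim (flip MyR) := by
  intro t0 t1 hR l t0' hstep
  cases hR with
  | idr t => exact ⟨t0', weak_of_step hstep, MyR.idr _⟩
  | sh t =>
      cases hstep with
      | shiftCap E =>
          refine ⟨reset (reset (substT 0 (contOf E) t)), ?_, MyR.rr _⟩
          have h := Step.shiftCap (t := reset t) E
          have : Step (shift (reset t)) (.ctx E)
              (reset (reset (substT 0 (contOf E) t))) := by
            simpa [substT] using h
          exact weak_of_step this
  | rr s =>
      cases hstep with
      | resetVal hv =>
          refine ⟨t0', ?_, MyR.idr _⟩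
          exact Relation.ReflTransGen.tail
            (Relation.ReflTransGen.single (Step.resetT (Step.resetVal hv)))
            (Step.resetVal hv)
      | resetT h =>
          exact ⟨reset (reset _), weak_of_step (Step.resetT (Step.resetT h)), MyR.rr _⟩
      | resetCap h =>
          obtain ⟨w, rfl⟩ := ctx_target h _ rfl
          exact ⟨reset (reset w), weak_of_step (Step.resetT (Step.resetCap h)), MyR.rr w⟩

end LamS
open LamS LamS.Tm in
/-- Sk.⟨t⟩ ≈ Sk.t (k is de Bruijn variable 0 in t). -/
theorem shift_reset_bisim :
    ∀ t : Tm, ClosedUnder 1 t → Bisim (shift (reset t)) (shift t) := by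
  intro t _
  exact ⟨MyR, ⟨myR_sim, myR_flip_sim⟩, MyR.sh t⟩
end

section
/- In λ_S, a stuck term is never bisimilar to a value; in particular Sk.(k v) is not applicatively bisimilar to v, for any closed value v. -/
namespace LamS

open Tm

section Aux

lemma comp_plug (E E' : PCtx) : ∀ t, (E.comp E').plug t = E.plug (E'.plug t) := by
  induction E' with
  | hole => intro t; rfl
  | appV b E' ih => intro t; simp [PCtx.comp, PCtx.plug, ih]
  | appL E' s ih => intro t; simp [PCtx.comp, PCtx.plug, ih]

lemma hole_comp (E : PCtx) : PCtx.comp .hole E = E := by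
  induction E <;> simp [PCtx.comp, *]

lemma comp_assoc (E A B : PCtx) : (E.comp A).comp B = E.comp (A.comp B) := by
  induction B <;> simp [PCtx.comp, *]

lemma ctx_shape : ∀ {t l t'}, Step t l t' → ∀ E, l = .ctx E →
    ∃ E₀ s, t = E₀.plug (shift s) ∧ t' = reset (substT 0 (contOf (E.comp E₀)) s) := by
  intro t l t' h
  induction h with
  | beta hv => intro E hE; cases hE
  | resetVal hv => intro E hE; cases hE
  | appL h ih => intro E hE; cases hE
  | appR hv h ih => intro E hE; cases hE
  | resetT h ih => intro E hE; cases hE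
  | resetCap h ih => intro E hE; cases hE
  | lamApp hv => intro E hE; cases hE
  | shiftCap E' => intro E hE; cases hE
                   exact ⟨.hole, _, rfl, rfl⟩
  | @capL t0 t0' t1 E' h ih =>
      intro E hE; cases hE
      obtain ⟨E₀, s, h1, h2⟩ := ih _ rfl
      refine ⟨(PCtx.appL .hole t1).comp E₀, s, ?_, ?_⟩
      · rw [comp_plug, h1]; rfl
      · rw [h2, ← comp_assoc]; rfl
  | @capR b t0 t0' E' h ih =>
      intro E hE; cases hE
      obtain ⟨E₀, s, h1, h2⟩ := ih _ rfl
      refine ⟨(PCtx.appV b .hole).comp E₀, s, ?_, ?_⟩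
      · rw [comp_plug, h1]; rfl
      · rw [h2, ← comp_assoc]; rfl

lemma tau_red : ∀ {t l t'}, Step t l t' → l = .tau → ∀ F : ECtx,
    Red (F.plug t) (F.plug t') := by
  intro t l t' h
  induction h with
  | beta hv => intro _ F; exact Red.beta F _ _ hv
  | resetVal hv => intro _ F; exact Red.res F _ hv
  | @appL t0 t0' t1 h ih => intro _ F; exact ih rfl (.appL F t1)
  | @appR v t t' hv h ih =>
      intro _ F
      obtain ⟨b, rfl⟩ := hv
      exact ih rfl (.appV b F)
  | resetT h ih => intro _ F; exact ih rfl (.resetC F)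
  | resetCap h ih =>
      intro _ F
      obtain ⟨E₀, s, h1, h2⟩ := ctx_shape h .hole rfl
      rw [h1, h2, hole_comp]
      exact Red.cap F E₀ s
  | lamApp hv => intro hE; cases hE
  | shiftCap E' => intro hE; cases hE
  | capL h ih => intro hE; cases hE
  | capR h ih => intro hE; cases hE

lemma stuck_no_tau {t u : Tm} (hst : Stuck t) (h : Step t .tau u) : False :=
  hst.2 u (tau_red h rfl .hole)

lemma taustar_eq {t u : Tm} (hst : Stuck t) (h : TauStar t u) : u = t := by
  rcases h.cases_head with h | ⟨c, hc, _⟩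
  · exact h.symm
  · exact absurd hc (fun hc => stuck_no_tau hst hc)

lemma step_val_lam {t w t' : Tm} (h : Step t (.val w) t') : ∃ b, t = lam b := by
  cases h; exact ⟨_, rfl⟩

lemma stuck_not_bisim {t v : Tm} (hst : Stuck t) (hv : IsValue v) :
    ¬ Bisim t v := by
  rintro ⟨R, ⟨hsim, hsimf⟩, hR⟩
  obtain ⟨b, rfl⟩ := hv
  have hstep : Step (lam b) (.val (lam (var 0))) (substT 0 (lam (var 0)) b) :=
    Step.lamApp ⟨_, rfl⟩
  obtain ⟨t', hw, _⟩ := hsimf (t0 := lam b) (t1 := t) hR hstep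
  obtain ⟨u, hts, hstp⟩ := hw
  rcases taustar_eq hst hts
  obtain ⟨b', rfl⟩ := step_val_lam hstp
  exact hst.1 ⟨_, rfl⟩

lemma red_shape {t u : Tm} (h : Red t u) :
    ∃ (F : ECtx) (r : Tm), t = F.plug r ∧
      ((∃ a b, r = app a b) ∨ (∃ a, r = reset a)) := by
  cases h with
  | beta F t v hv => exact ⟨F, _, rfl, Or.inl ⟨_, _, rfl⟩⟩
  | cap F E s => exact ⟨F, _, rfl, Or.inr ⟨_, rfl⟩⟩
  | res F v hv => exact ⟨F, _, rfl, Or.inr ⟨_, rfl⟩⟩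

lemma plug_ne_shift : ∀ (F : ECtx) (r : Tm),
    ((∃ a b, r = app a b) ∨ (∃ a, r = reset a)) → ∀ s, F.plug r ≠ shift s := by
  intro F
  induction F with
  | hole =>
      rintro r (⟨a, b, rfl⟩ | ⟨a, rfl⟩) s h <;> cases h
  | appV b F ih => intro r _ s; exact ih _ (Or.inl ⟨_, _, rfl⟩) s
  | appL F t ih => intro r _ s; exact ih _ (Or.inl ⟨_, _, rfl⟩) s
  | resetC F ih => intro r _ s; exact ih _ (Or.inr ⟨_, rfl⟩) s

lemma closedUnder_mono : ∀ (t : Tm) {n m : ℕ}, n ≤ m → ClosedUnder n t → ClosedUnder m t := by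
  intro t
  induction t with
  | var k => intro n m h hc; exact lt_of_lt_of_le hc h
  | lam t ih => intro n m h hc; exact ih (by omega) hc
  | app a b iha ihb => intro n m h hc; exact ⟨iha h hc.1, ihb h hc.2⟩
  | shift t ih => intro n m h hc; exact ih (by omega) hc
  | reset t ih => intro n m h hc; exact ih h hc

lemma lift_closed : ∀ (t : Tm) (d : ℕ) {c : ℕ}, ClosedUnder c t → liftT d c t = t := by
  intro t
  induction t with
  | var k =>
      intro d c hc
      have h : k < c := hc
      simp [liftT, h]
  | lam t ih => intro d c hc; simp [liftT, ih d hc]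
  | app a b iha ihb => intro d c hc; simp [liftT, iha d hc.1, ihb d hc.2]
  | shift t ih => intro d c hc; simp [liftT, ih d hc]
  | reset t ih => intro d c hc; simp [liftT, ih d hc]

end Aux

end LamS
open LamS LamS.Tm in
/-- a stuck term is never bisimilar to a value; in particular
    Sk.(k v) is not bisimilar to v. -/
theorem stuck_not_bisim_value :
    (∀ t v : Tm, Closed t → Stuck t → Closed v → IsValue v → ¬ Bisim t v) ∧
    (∀ v : Tm, Closed v → IsValue v →
      ¬ Bisim (shift (app (var 0) (liftT 1 0 v))) v) := by
  constructor
  · intro t v _ hst _ hv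
    exact stuck_not_bisim hst hv
  · intro v hcv hv
    have hstuck : Stuck (shift (app (var 0) (liftT 1 0 v))) := by
      constructor
      · rintro ⟨b, h⟩; cases h
      · intro u hr
        obtain ⟨F, r, heq, hshape⟩ := red_shape hr
        exact plug_ne_shift F r hshape _ heq.symm
    exact stuck_not_bisim hstuck hv
end
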